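/- Fix p ∈ (0,1), η > 0, ν ∈ ℝ, δ > 0, τ > 0, and let (A, ζ) with A > 0 be a nontrivial equilibrium (g₁ = g₂ = 0), with Jacobian J there. If A² < 1/(2p) then det J < 0, so J has one positive and one negative real eigenvalue (a saddle). If A² > 1/(2p) then det J > 0, and both eigenvalues of J have negative real part if and only if τ < 1/(2δ); when A² > 1/(2p) and τ = 1/(2δ) the eigenvalues of J are the purely imaginary pair ±i√(det J) (a Hopf bifurcation). -/

import Mathlib

open Matrix

/-- Slow-flow amplitude dynamics for a general network with a single nonlinear node
(small linear damping). -/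
noncomputable def g₁ (p ν η A ζ : ℝ) : ℝ :=
  (1 / 2) * ((p * ν - ζ) * A + (p ^ 2 * η / 4) * A ^ 3 - (p ^ 3 * η / 8) * A ^ 5)

/-- Proposed autonomous damping dynamics for a general network. -/
noncomputable def g₂ (p ν η δ τ A ζ : ℝ) : ℝ :=
  τ⁻¹ * (-ζ + δ + p * ν + (p ^ 2 * η / 8) * A ^ 2)

/-- Jacobian matrix of the planar vector field `(g₁, g₂)` with respect to `(A, ζ)`. -/
noncomputable def Jg (p ν η δ τ A ζ : ℝ) : Matrix (Fin 2) (Fin 2) ℝ :=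
  !![deriv (fun a => g₁ p ν η a ζ) A, deriv (fun z => g₁ p ν η A z) ζ;
     deriv (fun a => g₂ p ν η δ τ a ζ) A, deriv (fun z => g₂ p ν η δ τ A z) ζ]

lemma mem_spec_two {K : Type*} [Field K] (M : Matrix (Fin 2) (Fin 2) K) (μ : K) :
    μ ∈ spectrum K M ↔ (μ - M 0 0) * (μ - M 1 1) - M 0 1 * M 1 0 = 0 := by
  rw [spectrum.mem_iff, Matrix.isUnit_iff_isUnit_det, isUnit_iff_ne_zero, not_ne_iff,
    Matrix.det_fin_two]
  simp [Matrix.algebraMap_matrix_apply]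

lemma mem_spec_two' {K : Type*} [Field K] (a b c d μ : K) :
    μ ∈ spectrum K !![a, b; c, d] ↔ (μ - a) * (μ - d) - b * c = 0 := by
  rw [mem_spec_two]; simp

lemma map_two (f : ℝ → ℂ) (a b c d : ℝ) :
    (!![a, b; c, d]).map f = !![f a, f b; f c, f d] := by
  ext i j; fin_cases i <;> fin_cases j <;> simp

lemma delta_eq (p η ν δ τ A ζ : ℝ) (hτ : 0 < τ) (hA : 0 < A)
    (h1 : g₁ p ν η A ζ = 0) (h2 : g₂ p ν η δ τ A ζ = 0) :
    2 * δ = (p^2*η/4)*A^2 - (p^3*η/4)*A^4 := by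
  have key : ((p*ν - ζ) + (p^2*η/4)*A^2 - (p^3*η/8)*A^4) * A = 0 := by
    unfold g₁ at h1; linear_combination 2 * h1
  have e1 : (p*ν - ζ) + (p^2*η/4)*A^2 - (p^3*η/8)*A^4 = 0 :=
    (mul_eq_zero.mp key).resolve_right hA.ne'
  have key2 : -ζ + δ + p*ν + (p^2*η/8)*A^2 = 0 := by
    unfold g₂ at h2
    exact (mul_eq_zero.mp h2).resolve_left (inv_ne_zero hτ.ne')
  linear_combination 2*key2 - 2*e1

lemma jg_eq (p η ν δ τ A ζ : ℝ) (hτ : 0 < τ) (hA : 0 < A)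
    (h1 : g₁ p ν η A ζ = 0) (h2 : g₂ p ν η δ τ A ζ = 0) :
    Jg p ν η δ τ A ζ = !![2 * δ, -(A/2); τ⁻¹ * ((p^2*η/4) * A), -τ⁻¹] := by
  have key : ((p*ν - ζ) + (p^2*η/4)*A^2 - (p^3*η/8)*A^4) * A = 0 := by
    unfold g₁ at h1; linear_combination 2 * h1
  have e1 : (p*ν - ζ) + (p^2*η/4)*A^2 - (p^3*η/8)*A^4 = 0 :=
    (mul_eq_zero.mp key).resolve_right hA.ne'
  have hδeq := delta_eq p η ν δ τ A ζ hτ hA h1 h2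
  have d11 : HasDerivAt (fun a => g₁ p ν η a ζ)
      ((1/2) * ((p*ν - ζ) + (p^2*η/4) * (3*A^2) - (p^3*η/8) * (5*A^4))) A := by
    have h := ((((hasDerivAt_id A).const_mul (p*ν-ζ)).add
        ((hasDerivAt_pow 3 A).const_mul (p^2*η/4))).sub
        ((hasDerivAt_pow 5 A).const_mul (p^3*η/8))).const_mul (1/2)
    simp only [g₁, id_eq, Pi.add_apply, Pi.sub_apply] at h ⊢
    convert h using 1
    · rfl
    · rfl
    norm_num
  have d12 : HasDerivAt (fun z => g₁ p ν η A z) (-(A/2)) ζ := by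
    have h := ((((hasDerivAt_const ζ (p*ν)).sub (hasDerivAt_id ζ)).mul_const A).add_const
        ((p ^ 2 * η / 4) * A ^ 3 - (p ^ 3 * η / 8) * A ^ 5)).const_mul (1/2)
    simp only [g₁, id_eq, Pi.add_apply, Pi.sub_apply] at h ⊢
    convert h using 1
    · rfl
    · rfl
    · ext z; ring
    · ring
  have d21 : HasDerivAt (fun a => g₂ p ν η δ τ a ζ) (τ⁻¹ * ((p^2*η/8) * (2*A))) A := by
    have h := (((hasDerivAt_pow 2 A).const_mul (p^2*η/8)).const_add
        (-ζ + δ + p*ν)).const_mul τ⁻¹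
    simp only [g₂, Pi.add_apply] at h ⊢
    convert h using 2
    · rfl
    · rfl
    push_cast
    ring
  have d22 : HasDerivAt (fun z => g₂ p ν η δ τ A z) (-τ⁻¹) ζ := by
    have h := ((((hasDerivAt_id ζ).neg.add_const δ).add_const (p*ν)).add_const
        ((p ^ 2 * η / 8) * A ^ 2)).const_mul τ⁻¹
    simp only [g₂, id_eq, Pi.add_apply, Pi.neg_apply] at h ⊢
    convert h using 1
    · rfl
    · rfl
    ring
  unfold Jg
  rw [d11.deriv, d12.deriv, d21.deriv, d22.deriv]
  rw [show (1/2) * ((p*ν - ζ) + (p^2*η/4) * (3*A^2) - (p^3*η/8) * (5*A^4)) = 2*δ from by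
        linear_combination (1/2)*e1 - hδeq,
      show τ⁻¹ * ((p^2*η/8) * (2*A)) = τ⁻¹ * ((p^2*η/4) * A) from by ring]


/-- Stability of the nontrivial equilibria: for `A² < 1/(2p)` a saddle; for
`A² > 1/(2p)` stable iff `τ < 1/(2δ)`, with a Hopf bifurcation at `τ = 1/(2δ)`. -/
theorem stmt_13 (p η ν δ τ A ζ : ℝ) (hp : p ∈ Set.Ioo (0 : ℝ) 1) (hη : 0 < η)
    (hδ : 0 < δ) (hτ : 0 < τ) (hA : 0 < A)
    (h1 : g₁ p ν η A ζ = 0) (h2 : g₂ p ν η δ τ A ζ = 0) :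
    (A ^ 2 < 1 / (2 * p) →
      (Jg p ν η δ τ A ζ).det < 0 ∧
      ∃ μ₁ μ₂ : ℝ, μ₁ < 0 ∧ 0 < μ₂ ∧ spectrum ℝ (Jg p ν η δ τ A ζ) = {μ₁, μ₂}) ∧
    (1 / (2 * p) < A ^ 2 →
      0 < (Jg p ν η δ τ A ζ).det ∧
      ((∀ μ ∈ spectrum ℂ ((Jg p ν η δ τ A ζ).map Complex.ofReal), μ.re < 0) ↔
        τ < 1 / (2 * δ))) ∧
    (1 / (2 * p) < A ^ 2 → τ = 1 / (2 * δ) →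
      spectrum ℂ ((Jg p ν η δ τ A ζ).map Complex.ofReal) =
        {Complex.I * (Real.sqrt (Jg p ν η δ τ A ζ).det : ℂ),
         -(Complex.I * (Real.sqrt (Jg p ν η δ τ A ζ).det : ℂ))}) := by
  obtain ⟨hp0, hp1⟩ := hp
  have hJ := jg_eq p η ν δ τ A ζ hτ hA h1 h2
  have hδeq := delta_eq p η ν δ τ A ζ hτ hA h1 h2
  obtain ⟨T, hT_def⟩ : ∃ T : ℝ, T = 2*δ - τ⁻¹ := ⟨_, rfl⟩
  have hdetJ : (Jg p ν η δ τ A ζ).det =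
      2*δ * (-τ⁻¹) - (-(A/2)) * (τ⁻¹ * ((p^2*η/4) * A)) := by
    rw [hJ, Matrix.det_fin_two_of]
  obtain ⟨D, hD_def⟩ : ∃ D : ℝ, D = (Jg p ν η δ τ A ζ).det := ⟨_, rfl⟩
  have hdetJ' : D = 2*δ * (-τ⁻¹) - (-(A/2)) * (τ⁻¹ * ((p^2*η/4) * A)) := by
    rw [hD_def, hdetJ]
  have hdet : D = τ⁻¹ * ((p^2*η/8)*A^2) * (2*p*A^2 - 1) := by
    rw [hdetJ']; linear_combination (-τ⁻¹) * hδeq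
  have hτi : 0 < τ⁻¹ := inv_pos.mpr hτ
  have hmul : τ * τ⁻¹ = 1 := mul_inv_cancel₀ hτ.ne'
  -- real spectrum characterization
  have hspecR : ∀ μ : ℝ, μ ∈ spectrum ℝ (Jg p ν η δ τ A ζ) ↔ μ^2 - T*μ + D = 0 := by
    intro μ
    rw [hJ, mem_spec_two']
    constructor
    · intro h; linear_combination h + hdetJ' - μ * hT_def
    · intro h; linear_combination h - hdetJ' + μ * hT_def
  -- complex spectrum characterization
  have hdetC : (D:ℂ) = 2*(δ:ℂ) * (-(τ:ℂ)⁻¹) -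
      (-((A:ℂ)/2)) * ((τ:ℂ)⁻¹ * (((p:ℂ)^2*(η:ℂ)/4) * (A:ℂ))) := by
    have := congrArg (Complex.ofReal) hdetJ'
    push_cast at this
    exact this
  have hTC : (T:ℂ) = 2*(δ:ℂ) - (τ:ℂ)⁻¹ := by
    have := congrArg (Complex.ofReal) hT_def
    push_cast at this
    exact this
  have hspecC : ∀ μ : ℂ, μ ∈ spectrum ℂ ((Jg p ν η δ τ A ζ).map Complex.ofReal) ↔
      μ^2 - (T:ℂ)*μ + (D:ℂ) = 0 := by
    intro μ
    rw [hJ, map_two, mem_spec_two']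
    constructor
    · intro h; push_cast at h ⊢; linear_combination h + hdetC - μ * hTC
    · intro h; push_cast at h ⊢; linear_combination h - hdetC + μ * hTC
  refine ⟨?_, ?_, ?_⟩
  · -- saddle case
    intro hlt
    have h2p : 2*p*A^2 - 1 < 0 := by
      rw [lt_div_iff₀ (by positivity)] at hlt; linarith
    have hD : D < 0 := by
      rw [hdet]; exact mul_neg_of_pos_of_neg (by positivity) h2p
    have hdisc : (0:ℝ) < T^2 - 4*D := by nlinarith [sq_nonneg T]
    obtain ⟨s, hs_def⟩ : ∃ s : ℝ, s = Real.sqrt (T^2 - 4*D) := ⟨_, rfl⟩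
    have hs2 : s^2 = T^2 - 4*D := by rw [hs_def]; exact Real.sq_sqrt hdisc.le
    have hs0 : 0 ≤ s := hs_def ▸ Real.sqrt_nonneg _
    have habs : |T| < s := by nlinarith [abs_nonneg T, sq_abs T]
    refine ⟨hD_def ▸ hD, (T - s)/2, (T + s)/2,
      by linarith [le_abs_self T], by linarith [neg_abs_le T], ?_⟩
    ext μ
    rw [hspecR μ, Set.mem_insert_iff, Set.mem_singleton_iff]
    constructor
    · intro h
      have hf : (μ - (T - s)/2) * (μ - (T + s)/2) = 0 := by
        linear_combination h - (1/4)*hs2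
      rcases mul_eq_zero.mp hf with h' | h'
      · exact Or.inl (sub_eq_zero.mp h')
      · exact Or.inr (sub_eq_zero.mp h')
    · intro h
      rcases h with h | h <;> rw [h] <;> linear_combination (1/4)*hs2
  · -- A² > 1/(2p): stability iff τ < 1/(2δ)
    intro hgt
    have h2p : 0 < 2*p*A^2 - 1 := by
      rw [div_lt_iff₀ (by positivity)] at hgt; linarith
    have hD : 0 < D := by
      rw [hdet]; exact mul_pos (by positivity) h2p
    refine ⟨hD_def ▸ hD, ?_, ?_⟩
    · intro hall
      have hT : T < 0 := by
        by_cases hdisc : 0 ≤ T^2 - 4*D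
        · obtain ⟨s, hs_def⟩ : ∃ s : ℝ, s = Real.sqrt (T^2 - 4*D) := ⟨_, rfl⟩
          have hs2 : s^2 = T^2 - 4*D := by rw [hs_def]; exact Real.sq_sqrt hdisc
          have hs0 : 0 ≤ s := hs_def ▸ Real.sqrt_nonneg _
          have hs2C : (s:ℂ)^2 = (T:ℂ)^2 - 4*(D:ℂ) := by
            have := congrArg (Complex.ofReal) hs2; push_cast at this; exact this
          have hmem : (((T + s)/2 : ℝ) : ℂ) ∈
              spectrum ℂ ((Jg p ν η δ τ A ζ).map Complex.ofReal) := by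
            rw [hspecC]
            push_cast
            linear_combination ((1:ℂ)/4)*hs2C
          have := hall _ hmem
          rw [Complex.ofReal_re] at this
          linarith
        · push_neg at hdisc
          obtain ⟨w, hw_def⟩ : ∃ w : ℝ, w = Real.sqrt (4*D - T^2) := ⟨_, rfl⟩
          have hw2 : w^2 = 4*D - T^2 := by rw [hw_def]; exact Real.sq_sqrt (by linarith)
          have hw2C : (w:ℂ)^2 = 4*(D:ℂ) - (T:ℂ)^2 := by
            have := congrArg (Complex.ofReal) hw2; push_cast at this; exact this
          have hmem : ((T:ℂ)/2 + (w:ℂ)/2 * Complex.I) ∈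
              spectrum ℂ ((Jg p ν η δ τ A ζ).map Complex.ofReal) := by
            rw [hspecC]
            linear_combination ((w:ℂ)^2/4) * Complex.I_sq - (1/4)*hw2C
          have := hall _ hmem
          simp only [Complex.add_re, Complex.ofReal_re, Complex.mul_re, Complex.I_re,
            Complex.I_im, Complex.div_re, Complex.div_im] at this
          norm_num at this
          linarith
      have h2δ : 2*δ < τ⁻¹ := by rw [hT_def] at hT; linarith
      rw [lt_div_iff₀ (by positivity)]
      calc τ * (2*δ) < τ * τ⁻¹ := by exact mul_lt_mul_of_pos_left h2δ hτ
        _ = 1 := hmul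
    · intro hτlt μ hμ
      have h2δ : 2*δ < τ⁻¹ := by
        rw [lt_div_iff₀ (by positivity)] at hτlt
        have : τ * (2*δ) < τ * τ⁻¹ := by rw [hmul]; linarith
        exact lt_of_mul_lt_mul_left this hτ.le
      have hT : T < 0 := by rw [hT_def]; linarith
      rw [hspecC] at hμ
      have hμ' : μ*μ - (T:ℂ)*μ + (D:ℂ) = 0 := by linear_combination hμ
      have hre := congrArg Complex.re hμ'
      have him := congrArg Complex.im hμ'
      simp only [Complex.add_re, Complex.sub_re, Complex.mul_re, Complex.mul_im,
        Complex.add_im, Complex.sub_im, Complex.ofReal_re, Complex.ofReal_im,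
        Complex.zero_re, Complex.zero_im] at hre him
      rcases eq_or_ne μ.im 0 with hy | hy
      · rw [hy] at hre
        by_contra hcon
        push_neg at hcon
        linarith only [hre, hD, mul_nonneg (neg_nonneg.mpr hT.le) hcon,
          mul_self_nonneg μ.re]
      · have h2x : (2*μ.re - T) * μ.im = 0 := by linear_combination him
        have h2x' := (mul_eq_zero.mp h2x).resolve_right hy
        linarith only [h2x', hT]
  · -- Hopf case
    intro hgt hτeq
    have h2p : 0 < 2*p*A^2 - 1 := by
      rw [div_lt_iff₀ (by positivity)] at hgt; linarith
    have hD : 0 < D := by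
      rw [hdet]; exact mul_pos (by positivity) h2p
    have hτi2 : τ⁻¹ = 2*δ := by rw [hτeq, one_div, inv_inv]
    have hT0 : T = 0 := by rw [hT_def, hτi2]; ring
    have hT0C : (T:ℂ) = 0 := by rw [hT0]; norm_num
    rw [← hD_def]
    have hsC : ((Real.sqrt D : ℝ):ℂ)^2 = (D:ℂ) := by
      rw [← Complex.ofReal_pow, Real.sq_sqrt hD.le]
    ext μ
    rw [hspecC μ, hT0C, Set.mem_insert_iff, Set.mem_singleton_iff]
    constructor
    · intro h
      have hf : (μ - Complex.I * (Real.sqrt D : ℂ)) *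
          (μ + Complex.I * (Real.sqrt D : ℂ)) = 0 := by
        linear_combination h - ((Real.sqrt D : ℂ))^2 * Complex.I_sq + hsC
      rcases mul_eq_zero.mp hf with h' | h'
      · exact Or.inl (sub_eq_zero.mp h')
      · exact Or.inr (eq_neg_of_add_eq_zero_left h')
    · intro h
      rcases h with h | h <;> rw [h] <;>
        linear_combination ((Real.sqrt D : ℂ))^2 * Complex.I_sq - hsC
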